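/- Let φ : M_n(F) → M_n(F) be a nonzero map satisfying φ(X ∘ Y) = φ(X) ∘ φ(Y) for all X, Y ∈ M_n(F) and φ(0) = 0. Let P₁, …, P_r ∈ M_n(F) be idempotents that are mutually orthogonal (P_i P_j = 0 for i ≠ j) and let λ₁, …, λ_r ∈ F. Then φ(λ₁P₁ + ⋯ + λ_rP_r) = φ(λ₁P₁) + ⋯ + φ(λ_rP_r). -/

import Mathlib

open Matrix

section JordanLemmas

variable {F : Type*} [Field F] {A : Type*} [Ring A] [Algebra F A]

/-- normalized Jordan product -/
noncomputable def Jp (F : Type*) [Field F] {A : Type*} [Ring A] [Algebra F A] (x y : A) : A :=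
  (2 : F)⁻¹ • (x * y + y * x)

lemma smul_two_cancel (h2 : (2:F) ≠ 0) {x y : A} (h : (2:F) • x = (2:F) • y) : x = y := by
  have := congrArg (fun z => (2:F)⁻¹ • z) h
  simpa [smul_smul, inv_mul_cancel₀ h2] using this

lemma Jp_eq_of (h2 : (2:F) ≠ 0) {x y z : A} (h : x * y + y * x = (2:F) • z) :
    Jp F x y = z := by
  rw [Jp, h, smul_smul, inv_mul_cancel₀ h2, one_smul]

lemma of_Jp_eq (h2 : (2:F) ≠ 0) {x y z : A} (h : Jp F x y = z) :
    x * y + y * x = (2:F) • z := by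
  rw [← h, Jp, smul_smul, mul_inv_cancel₀ h2, one_smul]

lemma Jp_self (h2 : (2:F) ≠ 0) (x : A) : Jp F x x = x * x :=
  Jp_eq_of h2 (two_smul F (x*x)).symm

lemma Jp_one_right (h2 : (2:F) ≠ 0) (x : A) : Jp F x 1 = x :=
  Jp_eq_of h2 (by rw [mul_one, one_mul, two_smul])

@[simp] lemma Jp_zero_right (x : A) : Jp F x 0 = 0 := by simp [Jp]

@[simp] lemma Jp_zero_left (x : A) : Jp F 0 x = 0 := by simp [Jp]

lemma Jp_sub_left (x y z : A) : Jp F (x - y) z = Jp F x z - Jp F y z := by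
  rw [Jp, Jp, Jp, ← smul_sub]
  congr 1
  noncomm_ring

lemma Jp_smul_left (c : F) (x y : A) : Jp F (c • x) y = c • Jp F x y := by
  rw [Jp, Jp, smul_comm]
  congr 1
  rw [smul_mul_assoc, mul_smul_comm, smul_add]

lemma Jp_sum_left {ι : Type*} (s : Finset ι) (f : ι → A) (y : A) :
    Jp F (∑ i ∈ s, f i) y = ∑ i ∈ s, Jp F (f i) y := by
  simp only [Jp, Finset.sum_mul, Finset.mul_sum, ← Finset.sum_add_distrib, Finset.smul_sum]

lemma Jp_sum_right {ι : Type*} (s : Finset ι) (f : ι → A) (y : A) :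
    Jp F y (∑ i ∈ s, f i) = ∑ i ∈ s, Jp F y (f i) := by
  simp only [Jp, Finset.sum_mul, Finset.mul_sum, ← Finset.sum_add_distrib, Finset.smul_sum]

lemma peirce_lemma (h2 : (2:F) ≠ 0) {u y : A} (hu : u * u = u) (h : Jp F y u = y) :
    y * u = y ∧ u * y = y := by
  have H : y * u + u * y = (2:F) • y := of_Jp_eq h2 h
  have e1 : u * (y * u) + u * (u * y) = (2:F) • (u * y) := by
    rw [← mul_add, H, mul_smul_comm]
  rw [← mul_assoc, ← mul_assoc, hu, two_smul] at e1
  have euy : u * y * u = u * y := by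
    have := congrArg (fun z => z - u * y) e1
    simpa using this
  have e2 : y * u * u + u * y * u = (2:F) • (y * u) := by
    have := congrArg (fun z => z * u) H
    simpa [add_mul, smul_mul_assoc] using this
  rw [mul_assoc y u u, hu, two_smul] at e2
  have eyu : u * y * u = y * u := by
    have := congrArg (fun z => z - y * u) e2
    simpa using this
  have comm : u * y = y * u := by rw [← euy, eyu]
  rw [two_smul] at H
  have h3 : (2:F) • (y * u) = (2:F) • y := by
    rw [two_smul, two_smul]
    calc y * u + y * u = y * u + u * y := by rw [comm]
    _ = y + y := H
  have hyu : y * u = y := smul_two_cancel h2 h3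
  exact ⟨hyu, by rw [comm, hyu]⟩

lemma orth_of_anticomm (h2 : (2:F) ≠ 0) {a b : A} (ha : a * a = a) (hb : b * b = b)
    (h : a * b + b * a = 0) : a * b = 0 ∧ b * a = 0 := by
  have e1 : a * b + a * (b * a) = 0 := by
    have := congrArg (fun z => a * z) h
    simpa [mul_add, ← mul_assoc, ha] using this
  have e2 : a * (b * a) + b * a = 0 := by
    have := congrArg (fun z => z * a) h
    simpa [add_mul, mul_assoc, ha] using this
  have comm : a * b = b * a := by
    have c1 : a * b = -(a * (b * a)) := eq_neg_of_add_eq_zero_left e1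
    have c2 : b * a = -(a * (b * a)) := eq_neg_of_add_eq_zero_right e2
    exact c1.trans c2.symm
  have : (2:F) • (a * b) = (2:F) • (0 : A) := by
    rw [smul_zero, two_smul, ← h, comm]
  have hab : a * b = 0 := by simpa using smul_two_cancel h2 this
  exact ⟨hab, by rw [← comm, hab]⟩

end JordanLemmas

section Combinatorics

variable {F : Type*} [Field F] {m : Type*} [Fintype m] [DecidableEq m]

/-- matrix unit -/
noncomputable def stdE (F : Type*) [Field F] {m : Type*} [DecidableEq m] (a b : m) :
    Matrix m m F := Matrix.single a b 1

/-- diagonal 0/1 idempotent with support T -/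
noncomputable def piT (F : Type*) [Field F] {m : Type*} [Fintype m] [DecidableEq m]
    (T : Finset m) : Matrix m m F := ∑ k ∈ T, stdE F k k

lemma E_mul_E (a b c d : m) :
    stdE F a b * stdE F c d = if b = c then stdE F a d else 0 := by
  split_ifs with h
  · subst h; rw [stdE, stdE, stdE, Matrix.single_mul_single_same, one_mul]
  · rw [stdE, stdE, Matrix.single_mul_single_of_ne (h := h)]

lemma piT_mul_E (T : Finset m) (a b : m) :
    piT F T * stdE F a b = if a ∈ T then stdE F a b else 0 := by
  rw [piT, Finset.sum_mul]
  calc ∑ k ∈ T, stdE F k k * stdE F a b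
      = ∑ k ∈ T, if k = a then stdE F k b else 0 :=
        Finset.sum_congr rfl fun k _ => E_mul_E k k a b
    _ = if a ∈ T then stdE F a b else 0 := Finset.sum_ite_eq' T a (fun k => stdE F k b)

lemma E_mul_piT (T : Finset m) (a b : m) :
    stdE F a b * piT F T = if b ∈ T then stdE F a b else 0 := by
  rw [piT, Finset.mul_sum]
  calc ∑ k ∈ T, stdE F a b * stdE F k k
      = ∑ k ∈ T, if b = k then stdE F a k else 0 :=
        Finset.sum_congr rfl fun k _ => E_mul_E a b k k
    _ = if b ∈ T then stdE F a b else 0 := Finset.sum_ite_eq T b (fun k => stdE F a k)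

lemma piT_mul_piT (T U : Finset m) : piT F T * piT F U = piT F (T ∩ U) := by
  rw [piT, Finset.sum_mul]
  calc ∑ k ∈ T, stdE F k k * piT F U
      = ∑ k ∈ T, if k ∈ U then stdE F k k else 0 :=
        Finset.sum_congr rfl fun k _ => E_mul_piT U k k
    _ = ∑ k ∈ T ∩ U, stdE F k k := Finset.sum_ite_mem T U (fun k => stdE F k k)
    _ = piT F (T ∩ U) := rfl

lemma piT_union {T U : Finset m} (h : Disjoint T U) :
    piT F (T ∪ U) = piT F T + piT F U := Finset.sum_union h

lemma one_eq_piT : (1 : Matrix m m F) = piT F Finset.univ := by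
  ext i j
  rw [piT, Matrix.sum_apply]
  rw [Finset.sum_eq_single i (fun k _ hk => by
        rw [stdE]
        exact Matrix.single_apply_of_ne k k (1:F) i j (fun hc => hk hc.1))
      (fun h => absurd (Finset.mem_univ i) h)]
  by_cases h : i = j <;> simp [stdE, Matrix.one_apply, h, Matrix.single, Matrix.of_apply]

lemma Zsq (U : Finset m) (σ : m → m) (hU : ∀ x ∈ U, σ x ∉ U) (hinj : Set.InjOn σ U) :
    (∑ x ∈ U, (stdE F x (σ x) + stdE F (σ x) x)) * (∑ x ∈ U, (stdE F x (σ x) + stdE F (σ x) x)) =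
      piT F U + piT F (U.image σ) := by
  rw [Finset.sum_mul_sum]
  have key : ∀ x ∈ U, ∀ y ∈ U,
      (stdE F x (σ x) + stdE F (σ x) x) * (stdE F y (σ y) + stdE F (σ y) y) =
        if y = x then stdE F x x + stdE F (σ x) (σ x) else 0 := by
    intro x hx y hy
    rw [add_mul, mul_add, mul_add, E_mul_E, E_mul_E, E_mul_E, E_mul_E]
    by_cases hxy : y = x
    · subst hxy
      rw [if_pos rfl,
        if_neg (show ¬σ y = y from fun h => hU y hy (by rw [h]; exact hy)),
        if_pos rfl, if_pos rfl,
        if_neg (show ¬y = σ y from fun h => hU y hy (by rw [← h]; exact hy))]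
      simp
    · rw [if_neg hxy,
        if_neg (show ¬σ x = y from fun h => hU x hx (by rw [h]; exact hy)),
        if_neg (show ¬σ x = σ y from fun h => hxy (hinj hx hy h).symm),
        if_neg (show ¬x = y from fun h => hxy h.symm),
        if_neg (show ¬x = σ y from fun h => hU y hy (by rw [← h]; exact hx))]
      simp
  calc ∑ x ∈ U, ∑ y ∈ U, (stdE F x (σ x) + stdE F (σ x) x) * (stdE F y (σ y) + stdE F (σ y) y)
      = ∑ x ∈ U, ∑ y ∈ U, (if y = x then stdE F x x + stdE F (σ x) (σ x) else 0) := by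
        exact Finset.sum_congr rfl fun x hx => Finset.sum_congr rfl fun y hy => key x hx y hy
    _ = ∑ x ∈ U, (stdE F x x + stdE F (σ x) (σ x)) := by
        refine Finset.sum_congr rfl fun x hx => ?_
        rw [Finset.sum_ite_eq' U x (fun _ => stdE F x x + stdE F (σ x) (σ x)), if_pos hx]
    _ = piT F U + piT F (U.image σ) := by
        rw [Finset.sum_add_distrib, piT, piT, Finset.sum_image (fun x hx y hy h => hinj hx hy h)]

end Combinatorics

section Psi

variable {F : Type*} [Field F] {m : Type*} [Fintype m] [DecidableEq m] {n : ℕ}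
variable (ψ : Matrix m m F → Matrix (Fin n) (Fin n) F)

lemma psi_kill (h2 : (2:F) ≠ 0) (hψ : ∀ X Y, ψ (Jp F X Y) = Jp F (ψ X) (ψ Y)) (hnz : ψ ≠ 0)
    {V : Matrix m m F} (hVV : V * V = 1) (hV : ψ V = 0) : False := by
  have he : ψ 1 = 0 := by
    have h := hψ V V
    rw [Jp_self h2, hVV, hV] at h
    simpa using h
  apply hnz
  funext X
  have h := hψ X 1
  rw [Jp_one_right h2, he, Jp_zero_right] at h
  exact h

lemma killer (h2 : (2:F) ≠ 0) (hψ : ∀ X Y, ψ (Jp F X Y) = Jp F (ψ X) (ψ Y)) (hnz : ψ ≠ 0) :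
    ∀ (N : ℕ) (T : Finset m), Fintype.card m - T.card = N → T.Nonempty →
      ψ (piT F T) = 0 → False := by
  intro N
  induction N using Nat.strong_induction_on with
  | _ N IH =>
  intro T hN hTne hT0
  have hkill : ∀ Y, ψ (Jp F (piT F T) Y) = 0 := fun Y => by rw [hψ, hT0, Jp_zero_left]
  by_cases hc : Tᶜ.card ≤ T.card
  · -- finisher : build an involution V with ψ V = 0
    obtain ⟨f⟩ := Function.Embedding.nonempty_of_card_le (α := ↥(Tᶜ)) (β := ↥T)
        (by rw [Fintype.card_coe, Fintype.card_coe]; exact hc)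
    set σ : m → m := fun x => if h : x ∈ Tᶜ then (f ⟨x, h⟩ : m) else x with hσdef
    have hσmem : ∀ x ∈ Tᶜ, σ x ∈ T := fun x hx => by
      rw [hσdef]; dsimp only; rw [dif_pos hx]; exact (f ⟨x, hx⟩).2
    have hσnotin : ∀ x ∈ Tᶜ, σ x ∉ Tᶜ := fun x hx h =>
      (Finset.mem_compl.mp h) (hσmem x hx)
    have hinj : Set.InjOn σ ↑(Tᶜ) := by
      intro x hx y hy h
      rw [Finset.mem_coe] at hx hy
      rw [hσdef] at h; dsimp only at h; rw [dif_pos hx, dif_pos hy] at h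
      have := f.injective (Subtype.ext h)
      exact congrArg Subtype.val this
    set S : Finset m := Tᶜ.image σ with hS
    have hST : S ⊆ T := by
      intro z hz
      rw [hS, Finset.mem_image] at hz
      obtain ⟨x, hx, rfl⟩ := hz
      exact hσmem x hx
    have hSmem : ∀ x ∈ Tᶜ, σ x ∈ S := fun x hx => by
      rw [hS]; exact Finset.mem_image_of_mem σ hx
    set s1 : Matrix m m F := ∑ x ∈ Tᶜ, stdE F x (σ x) with hs1
    set s2 : Matrix m m F := ∑ x ∈ Tᶜ, stdE F (σ x) x with hs2
    set Aa : Matrix m m F := piT F (T \ S) with hA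
    set V : Matrix m m F := (s1 + s2) + Aa with hV
    have hπs1 : piT F T * s1 = 0 := by
      rw [hs1, Finset.mul_sum]
      refine Finset.sum_eq_zero fun x hx => ?_
      rw [piT_mul_E, if_neg (Finset.mem_compl.mp hx)]
    have hπs2 : piT F T * s2 = s2 := by
      rw [hs2, Finset.mul_sum]
      refine Finset.sum_congr rfl fun x hx => ?_
      rw [piT_mul_E, if_pos (hσmem x hx)]
    have hs1π : s1 * piT F T = s1 := by
      rw [hs1, Finset.sum_mul]
      refine Finset.sum_congr rfl fun x hx => ?_
      rw [E_mul_piT, if_pos (hσmem x hx)]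
    have hs2π : s2 * piT F T = 0 := by
      rw [hs2, Finset.sum_mul]
      refine Finset.sum_eq_zero fun x hx => ?_
      rw [E_mul_piT, if_neg (Finset.mem_compl.mp hx)]
    have hπA : piT F T * Aa = Aa := by
      rw [hA, piT_mul_piT, Finset.inter_eq_right.mpr (Finset.sdiff_subset)]
    have hAπ : Aa * piT F T = Aa := by
      rw [hA, piT_mul_piT, Finset.inter_eq_left.mpr (Finset.sdiff_subset)]
    have hV0 : ψ V = 0 := by
      have hJ : Jp F (piT F T) ((2:F) • (s1 + s2) + Aa) = V := by
        refine Jp_eq_of h2 ?_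
        rw [mul_add, add_mul, mul_smul_comm, smul_mul_assoc, mul_add, add_mul, hπs1, hπs2,
          hs1π, hs2π, hπA, hAπ, hV]
        simp only [smul_zero, smul_add, zero_add, add_zero, two_smul]
        abel
      have := hkill ((2:F) • (s1 + s2) + Aa)
      rwa [hJ] at this
    have hVV : V * V = 1 := by
      have hZZ : (s1 + s2) * (s1 + s2) = piT F Tᶜ + piT F S := by
        have hsum : s1 + s2 = ∑ x ∈ Tᶜ, (stdE F x (σ x) + stdE F (σ x) x) := by
          rw [hs1, hs2, Finset.sum_add_distrib]
        rw [hsum, hS]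
        exact Zsq Tᶜ σ hσnotin hinj
      have hZA : (s1 + s2) * Aa = 0 := by
        rw [hA, add_mul, hs1, hs2, Finset.sum_mul, Finset.sum_mul,
          Finset.sum_eq_zero (fun x hx => by
            rw [E_mul_piT, if_neg (fun h => (Finset.mem_sdiff.mp h).2 (hSmem x hx))]),
          Finset.sum_eq_zero (fun x hx => by
            rw [E_mul_piT, if_neg (fun h => Finset.mem_compl.mp hx (Finset.mem_sdiff.mp h).1)]),
          add_zero]
      have hAZ : Aa * (s1 + s2) = 0 := by
        rw [hA, mul_add, hs1, hs2, Finset.mul_sum, Finset.mul_sum,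
          Finset.sum_eq_zero (fun x hx => by
            rw [piT_mul_E, if_neg (fun h => Finset.mem_compl.mp hx (Finset.mem_sdiff.mp h).1)]),
          Finset.sum_eq_zero (fun x hx => by
            rw [piT_mul_E, if_neg (fun h => (Finset.mem_sdiff.mp h).2 (hSmem x hx))]),
          add_zero]
      have hAA : Aa * Aa = Aa := by rw [hA, piT_mul_piT, Finset.inter_self]
      rw [hV]
      have expand : (s1 + s2 + Aa) * (s1 + s2 + Aa) =
          (s1 + s2) * (s1 + s2) + (s1 + s2) * Aa + Aa * (s1 + s2) + Aa * Aa := by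
        noncomm_ring
      rw [expand, hZZ, hZA, hAZ, hAA, add_zero, add_zero, hA]
      have hd1 : Disjoint S (T \ S) := Finset.disjoint_sdiff
      have hd2 : Disjoint Tᶜ (S ∪ (T \ S)) := by
        rw [Finset.union_sdiff_of_subset hST]
        exact Finset.disjoint_left.mpr (fun a ha hb => Finset.mem_compl.mp ha hb)
      have huniv : Tᶜ ∪ (S ∪ (T \ S)) = Finset.univ := by
        rw [Finset.union_sdiff_of_subset hST]
        exact Finset.eq_univ_iff_forall.mpr (fun x => by
          by_cases h : x ∈ T <;> simp [h])
      rw [add_assoc, ← piT_union hd1, ← piT_union hd2, huniv]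
      exact (one_eq_piT).symm

    exact psi_kill ψ h2 hψ hnz hVV hV0
  · -- doubling step
    push_neg at hc
    obtain ⟨f⟩ := Function.Embedding.nonempty_of_card_le (α := ↥T) (β := ↥(Tᶜ))
        (by rw [Fintype.card_coe, Fintype.card_coe]; exact hc.le)
    set σ : m → m := fun x => if h : x ∈ T then (f ⟨x, h⟩ : m) else x with hσdef
    have hσmem : ∀ x ∈ T, σ x ∈ Tᶜ := fun x hx => by
      rw [hσdef]; dsimp only; rw [dif_pos hx]; exact (f ⟨x, hx⟩).2
    have hσnotin : ∀ x ∈ T, σ x ∉ T := fun x hx => Finset.mem_compl.mp (hσmem x hx)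
    have hinj : Set.InjOn σ ↑T := by
      intro x hx y hy h
      rw [Finset.mem_coe] at hx hy
      rw [hσdef] at h; dsimp only at h; rw [dif_pos hx, dif_pos hy] at h
      exact congrArg Subtype.val (f.injective (Subtype.ext h))
    set s1 : Matrix m m F := ∑ x ∈ T, stdE F x (σ x) with hs1
    set s2 : Matrix m m F := ∑ x ∈ T, stdE F (σ x) x with hs2
    set Z : Matrix m m F := s1 + s2 with hZdef
    have hπs1 : piT F T * s1 = s1 := by
      rw [hs1, Finset.mul_sum]
      exact Finset.sum_congr rfl fun x hx => by rw [piT_mul_E, if_pos hx]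
    have hπs2 : piT F T * s2 = 0 := by
      rw [hs2, Finset.mul_sum]
      exact Finset.sum_eq_zero fun x hx => by rw [piT_mul_E, if_neg (hσnotin x hx)]
    have hs1π : s1 * piT F T = 0 := by
      rw [hs1, Finset.sum_mul]
      exact Finset.sum_eq_zero fun x hx => by rw [E_mul_piT, if_neg (hσnotin x hx)]
    have hs2π : s2 * piT F T = s2 := by
      rw [hs2, Finset.sum_mul]
      exact Finset.sum_congr rfl fun x hx => by rw [E_mul_piT, if_pos hx]
    have hψZ : ψ Z = 0 := by
      have hJ : Jp F (piT F T) ((2:F) • Z) = Z := by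
        refine Jp_eq_of h2 ?_
        rw [mul_smul_comm, smul_mul_assoc, hZdef, mul_add, add_mul, hπs1, hπs2, hs1π, hs2π,
          add_zero, zero_add, smul_add]
      have := hkill ((2:F) • Z)
      rwa [hJ] at this
    have hT'0 : ψ (piT F (T ∪ T.image σ)) = 0 := by
      have hZZ : Z * Z = piT F T + piT F (T.image σ) := by
        have hsum : Z = ∑ x ∈ T, (stdE F x (σ x) + stdE F (σ x) x) := by
          rw [hZdef, hs1, hs2, Finset.sum_add_distrib]
        rw [hsum]
        exact Zsq T σ hσnotin hinj
      have hdisj : Disjoint T (T.image σ) := Finset.disjoint_left.mpr fun a ha hb => by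
        rw [Finset.mem_image] at hb
        obtain ⟨x, hx, rfl⟩ := hb
        exact hσnotin x hx ha
      have : ψ (Z * Z) = 0 := by
        rw [← Jp_self h2 Z, hψ, hψZ, Jp_zero_left]
      rwa [hZZ, ← piT_union hdisj] at this
    have hTsub : T ⊆ T ∪ T.image σ := Finset.subset_union_left
    have hcard2 : (T ∪ T.image σ).card = 2 * T.card := by
      rw [Finset.card_union_of_disjoint (Finset.disjoint_left.mpr fun a ha hb => by
        rw [Finset.mem_image] at hb
        obtain ⟨x, hx, rfl⟩ := hb
        exact hσnotin x hx ha)]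
      rw [Finset.card_image_of_injOn hinj]
      omega
    have hcardle : (T ∪ T.image σ).card ≤ Fintype.card m := by
      simpa using Finset.card_le_univ (T ∪ T.image σ)
    have hTpos : 1 ≤ T.card := Finset.card_pos.mpr hTne
    exact IH (Fintype.card m - (T ∪ T.image σ).card) (by omega)
      (T ∪ T.image σ) rfl (hTne.mono hTsub) hT'0

end Psi

section Rank

open Module

variable {F : Type*} [Field F] {p : Type*} [Fintype p] [DecidableEq p]

lemma rank_add_of_orth {x y : Matrix p p F} (hx : x * x = x) (hy : y * y = y)
    (hxy : x * y = 0) (hyx : y * x = 0) : (x + y).rank = x.rank + y.rank := by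
  have hsup : LinearMap.range (x + y).mulVecLin
      = LinearMap.range x.mulVecLin ⊔ LinearMap.range y.mulVecLin := by
    apply le_antisymm
    · rintro v ⟨u, rfl⟩
      refine Submodule.mem_sup.mpr ⟨x *ᵥ u, ⟨u, rfl⟩, y *ᵥ u, ⟨u, rfl⟩, ?_⟩
      simp [Matrix.mulVecLin_apply, Matrix.add_mulVec]
    · rw [sup_le_iff]
      constructor
      · rintro v ⟨u, rfl⟩
        refine ⟨x *ᵥ u, ?_⟩
        rw [Matrix.mulVecLin_apply, Matrix.mulVecLin_apply, Matrix.mulVec_mulVec,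
          add_mul, hx, hyx, add_zero]
      · rintro v ⟨u, rfl⟩
        refine ⟨y *ᵥ u, ?_⟩
        rw [Matrix.mulVecLin_apply, Matrix.mulVecLin_apply, Matrix.mulVec_mulVec,
          add_mul, hy, hxy, zero_add]
  have hinf : LinearMap.range x.mulVecLin ⊓ LinearMap.range y.mulVecLin = ⊥ := by
    rw [Submodule.eq_bot_iff]
    rintro v ⟨⟨u, hu⟩, ⟨w, hw⟩⟩
    rw [Matrix.mulVecLin_apply] at hu hw
    have h1 : x *ᵥ v = v := by rw [← hu, Matrix.mulVec_mulVec, hx]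
    have h2 : v = 0 := by
      rw [← h1, ← hw, Matrix.mulVec_mulVec, hxy, Matrix.zero_mulVec]
    exact h2
  have hdim := Submodule.finrank_sup_add_finrank_inf_eq
    (LinearMap.range x.mulVecLin) (LinearMap.range y.mulVecLin)
  rw [hinf, finrank_bot, add_zero] at hdim
  unfold Matrix.rank
  rw [hsup, hdim]

lemma eq_zero_of_rank_eq_zero {x : Matrix p p F} (h : x.rank = 0) : x = 0 := by
  unfold Matrix.rank at h
  rw [Submodule.finrank_eq_zero, LinearMap.range_eq_bot] at h
  ext i j
  have hv : x.mulVecLin (Pi.single j 1) = 0 := by rw [h]; rfl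
  rw [Matrix.mulVecLin_apply, Matrix.mulVec_single_one] at hv
  have := congrFun hv i
  simpa [Matrix.transpose_apply] using this

lemma sum_orth_family {κ : Type*} [DecidableEq κ] (z : κ → Matrix p p F)
    (hid : ∀ k, z k * z k = z k) (ho : ∀ k l, k ≠ l → z k * z l = 0) (s : Finset κ) :
    ((∑ k ∈ s, z k) * (∑ k ∈ s, z k) = ∑ k ∈ s, z k) ∧
    (∑ k ∈ s, z k).rank = ∑ k ∈ s, (z k).rank := by
  induction s using Finset.induction_on with
  | empty => simp
  | @insert a s ha IH =>
    obtain ⟨hidem, hrank⟩ := IH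
    have horthL : z a * (∑ k ∈ s, z k) = 0 := by
      rw [Finset.mul_sum]
      exact Finset.sum_eq_zero fun k hk => ho a k (fun h => ha (h ▸ hk))
    have horthR : (∑ k ∈ s, z k) * z a = 0 := by
      rw [Finset.sum_mul]
      exact Finset.sum_eq_zero fun k hk => ho k a (fun h => ha (h ▸ hk))
    constructor
    · rw [Finset.sum_insert ha, add_mul, mul_add, mul_add, hid, hidem, horthL, horthR,
        add_zero, zero_add]
    · rw [Finset.sum_insert ha, Finset.sum_insert ha,
        rank_add_of_orth (hid a) hidem horthL horthR, hrank]

end Rank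

section Main

theorem main' {F : Type*} [Field F] (h2 : (2:F) ≠ 0) {m : Type*} [Fintype m] [DecidableEq m]
    {n : ℕ} (hcard : Fintype.card m = n)
    (ψ : Matrix m m F → Matrix (Fin n) (Fin n) F)
    (hψ : ∀ X Y, ψ (Jp F X Y) = Jp F (ψ X) (ψ Y))
    (hnz : ψ ≠ 0) (h0 : ψ 0 = 0)
    {s : ℕ} (t : m → Fin s) (lam : Fin s → F)
    (D : Fin s → Matrix m m F)
    (hD : ∀ j, D j = ∑ k : m, (if t k = j then (1:F) else 0) • stdE F k k) :
    ψ (∑ j, lam j • D j) = ∑ j, ψ (lam j • D j) := by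
  classical
  set e := ψ 1 with he
  have hJe : ∀ X, Jp F (ψ X) e = ψ X := fun X => by
    rw [he, ← hψ, Jp_one_right h2]
  have hee : e * e = e := by
    have h := hψ 1 1
    rw [Jp_one_right h2, Jp_self h2] at h
    exact h.symm
  set pE : m → Matrix m m F := fun k => stdE F k k with hpE
  set y : m → Matrix (Fin n) (Fin n) F := fun k => ψ (pE k) with hy
  have hpidem : ∀ k, pE k * pE k = pE k := fun k => by
    rw [hpE]; dsimp only; rw [E_mul_E, if_pos rfl]
  have hyidem : ∀ k, y k * y k = y k := by
    intro k
    have h := hψ (pE k) (pE k)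
    rw [Jp_self h2, hpidem, Jp_self h2] at h
    exact h.symm
  have hyorth : ∀ k l, k ≠ l → y k * y l = 0 ∧ y l * y k = 0 := by
    intro k l hkl
    have hJ : Jp F (pE k) (pE l) = 0 := by
      rw [Jp, hpE]; dsimp only
      rw [E_mul_E, E_mul_E, if_neg hkl, if_neg (fun h : l = k => hkl h.symm), add_zero,
        smul_zero]
    have h := hψ (pE k) (pE l)
    rw [hJ, h0] at h
    have hanti : y k * y l + y l * y k = (2:F) • (0 : Matrix (Fin n) (Fin n) F) :=
      of_Jp_eq h2 h.symm
    rw [smul_zero] at hanti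
    exact orth_of_anticomm h2 (hyidem k) (hyidem l) hanti
  have hynz : ∀ k, y k ≠ 0 := by
    intro k hk
    have hsingle : pE k = piT F {k} := by
      rw [piT, Finset.sum_singleton, hpE]
    refine killer ψ h2 hψ hnz (Fintype.card m - ({k} : Finset m).card) {k} rfl
      (Finset.singleton_nonempty k) ?_
    rw [← hsingle]
    exact hk
  have hyey : ∀ k, y k * e = y k ∧ e * y k = y k := fun k => peirce_lemma h2 hee (hJe (pE k))
  set Sy : Matrix (Fin n) (Fin n) F := ∑ k : m, y k with hSy
  have hSfam := sum_orth_family y hyidem (fun k l h => (hyorth k l h).1) Finset.univ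
  have hSidem : Sy * Sy = Sy := hSfam.1
  have hSyrank : Sy.rank = ∑ k : m, (y k).rank := hSfam.2
  set G : Matrix (Fin n) (Fin n) F := e - Sy with hG
  have heS : e = Sy + G := by rw [hG]; abel
  have hSe : Sy * e = Sy := by
    rw [hSy, Finset.sum_mul]
    exact Finset.sum_congr rfl fun k _ => (hyey k).1
  have heSmul : e * Sy = Sy := by
    rw [hSy, Finset.mul_sum]
    exact Finset.sum_congr rfl fun k _ => (hyey k).2
  have hSG : Sy * G = 0 := by rw [hG, mul_sub, hSe, hSidem, sub_self]
  have hGS : G * Sy = 0 := by rw [hG, sub_mul, heSmul, hSidem, sub_self]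
  have hGidem : G * G = G := by
    rw [hG, sub_mul, mul_sub, mul_sub, hee, hSe, heSmul, hSidem]
    abel
  have hGzero : G = 0 := by
    have h1 : (Sy + G).rank = Sy.rank + G.rank := rank_add_of_orth hSidem hGidem hSG hGS
    have h2' : (Sy + G).rank ≤ n := by
      rw [← heS]
      have := Matrix.rank_le_card_width e
      rwa [Fintype.card_fin] at this
    have h3 : ∀ k, 1 ≤ (y k).rank := by
      intro k
      by_contra hcon
      push_neg at hcon
      exact hynz k (eq_zero_of_rank_eq_zero (by omega))
    have h4 : n ≤ ∑ k : m, (y k).rank := by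
      calc n = Fintype.card m := hcard.symm
        _ = ∑ _k : m, 1 := by simp
        _ ≤ ∑ k : m, (y k).rank := Finset.sum_le_sum fun k _ => h3 k
    have : G.rank = 0 := by omega
    exact eq_zero_of_rank_eq_zero this
  have heSy : e = Sy := by rw [heS, hGzero, add_zero]
  -- products with the diagonal matrices
  have hDp : ∀ j k, D j * pE k = (if t k = j then (1:F) else 0) • pE k := by
    intro j k
    rw [hD j, Finset.sum_mul]
    calc ∑ l : m, ((if t l = j then (1:F) else 0) • stdE F l l) * pE k
        = ∑ l : m, (if l = k then (if t l = j then (1:F) else 0) • stdE F l k else 0) := by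
          refine Finset.sum_congr rfl fun l _ => ?_
          rw [smul_mul_assoc, hpE]; dsimp only
          rw [E_mul_E, smul_ite, smul_zero]
    _ = (if t k = j then (1:F) else 0) • pE k := by
          rw [Finset.sum_ite_eq' Finset.univ k
            (fun l => (if t l = j then (1:F) else 0) • stdE F l k), if_pos (Finset.mem_univ k)]
  have hpD : ∀ j k, pE k * D j = (if t k = j then (1:F) else 0) • pE k := by
    intro j k
    rw [hD j, Finset.mul_sum]
    calc ∑ l : m, pE k * ((if t l = j then (1:F) else 0) • stdE F l l)
        = ∑ l : m, (if k = l then (if t l = j then (1:F) else 0) • stdE F k l else 0) := by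
          refine Finset.sum_congr rfl fun l _ => ?_
          rw [mul_smul_comm, hpE]; dsimp only
          rw [E_mul_E, smul_ite, smul_zero]
    _ = (if t k = j then (1:F) else 0) • pE k := by
          rw [Finset.sum_ite_eq Finset.univ k
            (fun l => (if t l = j then (1:F) else 0) • stdE F k l), if_pos (Finset.mem_univ k)]
  set Amat : Matrix m m F := ∑ j, lam j • D j with hAmat
  have hApk : ∀ k, Amat * pE k = lam (t k) • pE k := by
    intro k
    rw [hAmat, Finset.sum_mul]
    calc ∑ j, (lam j • D j) * pE k
        = ∑ j, (if t k = j then lam j • pE k else 0) := by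
          refine Finset.sum_congr rfl fun j _ => ?_
          rw [smul_mul_assoc, hDp j k, smul_smul, mul_ite, mul_one, mul_zero, ite_smul,
            zero_smul]
    _ = lam (t k) • pE k := by
          rw [Finset.sum_ite_eq Finset.univ (t k) (fun j => lam j • pE k),
            if_pos (Finset.mem_univ (t k))]
  have hpkA : ∀ k, pE k * Amat = lam (t k) • pE k := by
    intro k
    rw [hAmat, Finset.mul_sum]
    calc ∑ j, pE k * (lam j • D j)
        = ∑ j, (if t k = j then lam j • pE k else 0) := by
          refine Finset.sum_congr rfl fun j _ => ?_
          rw [mul_smul_comm, hpD j k, smul_smul, mul_ite, mul_one, mul_zero, ite_smul,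
            zero_smul]
    _ = lam (t k) • pE k := by
          rw [Finset.sum_ite_eq Finset.univ (t k) (fun j => lam j • pE k),
            if_pos (Finset.mem_univ (t k))]
  have hJA : ∀ k, Jp F Amat (pE k) = lam (t k) • pE k := fun k =>
    Jp_eq_of h2 (by rw [hApk, hpkA, ← two_smul F (lam (t k) • pE k)])
  have hJD : ∀ j k, Jp F (lam j • D j) (pE k) =
      if t k = j then lam (t k) • pE k else 0 := by
    intro j k
    refine Jp_eq_of h2 ?_
    rw [smul_mul_assoc, mul_smul_comm, hDp j k, hpD j k, smul_smul, mul_ite, mul_one, mul_zero,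
      ite_smul, zero_smul, ← two_smul F]
    split_ifs with h
    · subst h; rfl
    · rfl
  -- final computation
  set a := ψ Amat with ha
  set c : Fin s → Matrix (Fin n) (Fin n) F := fun j => ψ (lam j • D j) with hc
  set d := a - ∑ j, c j with hd
  have hJdy : ∀ k, Jp F d (y k) = 0 := by
    intro k
    rw [hd, Jp_sub_left]
    have e1 : Jp F a (y k) = ψ (lam (t k) • pE k) := by
      rw [ha, hy]; dsimp only
      rw [← hψ, hJA]
    have e2 : Jp F (∑ j, c j) (y k) = ψ (lam (t k) • pE k) := by
      rw [Jp_sum_left]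
      calc ∑ j, Jp F (c j) (y k)
          = ∑ j, (if t k = j then ψ (lam (t k) • pE k) else 0) := by
            refine Finset.sum_congr rfl fun j _ => ?_
            rw [hc, hy]; dsimp only
            rw [← hψ, hJD j k, apply_ite ψ, h0]
      _ = ψ (lam (t k) • pE k) := by
            rw [Finset.sum_ite_eq Finset.univ (t k)
              (fun _ => ψ (lam (t k) • pE k)), if_pos (Finset.mem_univ (t k))]
    rw [e1, e2, sub_self]
  have hJde : Jp F d e = d := by
    rw [hd, Jp_sub_left, ha, hJe, Jp_sum_left]
    congr 1
    refine Finset.sum_congr rfl fun j _ => ?_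
    rw [hc]; dsimp only
    rw [hJe]
  have hdzero : d = 0 := by
    rw [← hJde, heSy, hSy, Jp_sum_right]
    exact Finset.sum_eq_zero fun k _ => hJdy k
  have := sub_eq_zero.mp (hd ▸ hdzero)
  rw [ha, hc] at this
  exact this

end Main

section DiagHelper

variable {F : Type*} [Field F] {m : Type*} [Fintype m] [DecidableEq m]

lemma sum_mulVec' {kk : Type*} [DecidableEq kk] (s : Finset kk) (M : kk → Matrix m m F) (v : m → F) :
    (∑ j ∈ s, M j) *ᵥ v = ∑ j ∈ s, (M j) *ᵥ v := by
  induction s using Finset.induction_on with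
  | empty => simp [Matrix.zero_mulVec]
  | @insert a s ha IH => rw [Finset.sum_insert ha, Finset.sum_insert ha, Matrix.add_mulVec, IH]

lemma diagF_eq (g : m → F) :
    (∑ k : m, g k • stdE F k k) = Matrix.diagonal g := by
  ext i j
  rw [Matrix.sum_apply]
  rw [Finset.sum_eq_single i (fun k _ hk => by
      rw [Matrix.smul_apply, stdE,
        Matrix.single_apply_of_ne k k (1:F) i j (fun hc => hk hc.1), smul_zero])
    (fun h => absurd (Finset.mem_univ i) h)]
  rw [Matrix.smul_apply, stdE]
  by_cases h : j = i
  · subst h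
    rw [Matrix.single_apply_same, Matrix.diagonal_apply_eq, smul_eq_mul, mul_one]
  · rw [Matrix.single_apply_of_ne i i (1:F) i j (fun hc => h hc.2.symm), smul_zero,
      Matrix.diagonal_apply_ne' _ h]

end DiagHelper

theorem stmt_15 {F : Type*} [Field F] (h2 : (2 : F) ≠ 0) (n : ℕ)
    (φ : Matrix (Fin n) (Fin n) F → Matrix (Fin n) (Fin n) F)
    (hφ : ∀ X Y : Matrix (Fin n) (Fin n) F,
      φ ((2 : F)⁻¹ • (X * Y + Y * X)) = (2 : F)⁻¹ • (φ X * φ Y + φ Y * φ X))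
    (hnz : φ ≠ 0) (h0 : φ 0 = 0)
    (r : ℕ) (P : Fin r → Matrix (Fin n) (Fin n) F) (lam : Fin r → F)
    (hP : ∀ i, P i * P i = P i)
    (horth : ∀ i j, i ≠ j → P i * P j = 0) :
    φ (∑ i, lam i • P i) = ∑ i, φ (lam i • P i) := by
  classical
  have hφJ : ∀ X Y, φ (Jp F X Y) = Jp F (φ X) (φ Y) := by
    intro X Y
    simp only [Jp]
    exact hφ X Y
  -- complete the family of idempotents
  set Rm : Matrix (Fin n) (Fin n) F := 1 - ∑ i, P i with hRm
  set Q : Fin (r+1) → Matrix (Fin n) (Fin n) F := Fin.snoc P Rm with hQ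
  have hSmulP : ∀ i, (∑ k, P k) * P i = P i := by
    intro i
    rw [Finset.sum_mul]
    rw [Finset.sum_eq_single i (fun k _ hk => horth k i hk)
      (fun h => absurd (Finset.mem_univ i) h)]
    exact hP i
  have hPmulS : ∀ i, P i * (∑ k, P k) = P i := by
    intro i
    rw [Finset.mul_sum]
    rw [Finset.sum_eq_single i (fun k _ hk => horth i k (fun h => hk h.symm))
      (fun h => absurd (Finset.mem_univ i) h)]
    exact hP i
  have hSS : (∑ k, P k) * (∑ k, P k) = ∑ k, P k := by
    rw [Finset.mul_sum]
    exact Finset.sum_congr rfl fun i _ => hSmulP i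
  have hQidem : ∀ j, Q j * Q j = Q j := by
    intro j
    induction j using Fin.lastCases with
    | last =>
      rw [hQ]
      simp only [Fin.snoc_last]
      rw [hRm]
      have hexp : (1 - ∑ i, P i) * (1 - ∑ i, P i) =
          1 - (∑ i, P i) - (∑ i, P i) + (∑ i, P i) * (∑ i, P i) := by noncomm_ring
      rw [hexp, hSS]
      abel
    | cast i =>
      rw [hQ]
      simp only [Fin.snoc_castSucc]
      exact hP i
  have hQorth : ∀ i j, i ≠ j → Q i * Q j = 0 := by
    intro i j hij
    induction i using Fin.lastCases with
    | last =>
      induction j using Fin.lastCases with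
      | last => exact absurd rfl hij
      | cast b =>
        rw [hQ]
        simp only [Fin.snoc_last, Fin.snoc_castSucc]
        rw [hRm, sub_mul, one_mul, hSmulP b, sub_self]
    | cast a =>
      induction j using Fin.lastCases with
      | last =>
        rw [hQ]
        simp only [Fin.snoc_last, Fin.snoc_castSucc]
        rw [hRm, mul_sub, mul_one, hPmulS a, sub_self]
      | cast b =>
        rw [hQ]
        simp only [Fin.snoc_castSucc]
        exact horth a b (fun h => hij (by rw [h]))
  have hQsum : ∑ j, Q j = 1 := by
    rw [Fin.sum_univ_castSucc]
    rw [hQ]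
    simp only [Fin.snoc_castSucc, Fin.snoc_last]
    rw [hRm]
    abel
  -- simultaneous diagonalization, packaged opaquely
  have hex : ∃ (Bm Cm : Matrix (Fin n) (Fin n) F) (tt : Fin n → Fin (r+1)),
      Bm * Cm = 1 ∧ Cm * Bm = 1 ∧
      ∀ j, Q j * Bm = Bm * Matrix.diagonal (fun k => if tt k = j then (1:F) else 0) := by
    set W : Fin (r+1) → Submodule F (Fin n → F) :=
      fun j => LinearMap.range (Q j).mulVecLin with hW
    have hWfix : ∀ j v, v ∈ W j → (Q j) *ᵥ v = v := by
      intro j v hv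
      obtain ⟨u, rfl⟩ := hv
      rw [Matrix.mulVecLin_apply, Matrix.mulVec_mulVec, hQidem]
    have hWkill : ∀ i j, i ≠ j → ∀ v ∈ W j, (Q i) *ᵥ v = 0 := by
      intro i j hij v hv
      obtain ⟨u, rfl⟩ := hv
      rw [Matrix.mulVecLin_apply, Matrix.mulVec_mulVec, hQorth i j hij, Matrix.zero_mulVec]
    have hInd : iSupIndep W := by
      rw [iSupIndep_def]
      intro i
      rw [Submodule.disjoint_def]
      intro v hv1 hv2
      have hker : (⨆ j, ⨆ (_ : j ≠ i), W j) ≤ LinearMap.ker (Q i).mulVecLin := by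
        refine iSup_le fun j => iSup_le fun hj => ?_
        intro w hw
        rw [LinearMap.mem_ker, Matrix.mulVecLin_apply]
        exact hWkill i j (Ne.symm hj) w hw
      have hv0 := hker hv2
      rw [LinearMap.mem_ker, Matrix.mulVecLin_apply] at hv0
      rw [← hWfix i v hv1, hv0]
    have hTop : (⨆ j, W j) = ⊤ := by
      rw [eq_top_iff]
      intro v _
      have hv : v = ∑ j, (Q j) *ᵥ v := by
        calc v = (1 : Matrix (Fin n) (Fin n) F) *ᵥ v := (Matrix.one_mulVec v).symm
          _ = (∑ j, Q j) *ᵥ v := by rw [hQsum]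
          _ = ∑ j, (Q j) *ᵥ v := sum_mulVec' Finset.univ Q v
      rw [hv]
      exact Submodule.sum_mem _ fun j _ =>
        Submodule.mem_iSup_of_mem j ⟨v, rfl⟩
    have hInternal : DirectSum.IsInternal W :=
      (DirectSum.isInternal_submodule_iff_iSupIndep_and_iSup_eq_top W).mpr ⟨hInd, hTop⟩
    set vB : (j : Fin (r+1)) → Module.Basis (Fin (Module.finrank F (W j))) F (W j) :=
      fun j => Module.finBasis F (W j) with hvB
    set cb := hInternal.collectedBasis vB with hcb
    have hcardι : Fintype.card ((j : Fin (r+1)) × Fin (Module.finrank F (W j))) = n := by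
      have h1 := Module.finrank_eq_card_basis cb
      rw [Module.finrank_pi] at h1
      rw [← h1, Fintype.card_fin]
    set eqv : ((j : Fin (r+1)) × Fin (Module.finrank F (W j))) ≃ Fin n :=
      Fintype.equivFinOfCardEq hcardι with heqv
    set b : Module.Basis (Fin n) F (Fin n → F) := cb.reindex eqv with hb
    set tt : Fin n → Fin (r+1) := fun k => (eqv.symm k).1 with htt
    have hbmem : ∀ k, (b k : Fin n → F) ∈ W (tt k) := by
      intro k
      rw [hb, Module.Basis.reindex_apply]
      exact hInternal.collectedBasis_mem vB (eqv.symm k)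
    set Bm : Matrix (Fin n) (Fin n) F := (Pi.basisFun F (Fin n)).toMatrix b with hBm
    letI hBinv : Invertible Bm := (Pi.basisFun F (Fin n)).invertibleToMatrix b
    have hBapply : ∀ x k, Bm x k = b k x := by
      intro x k
      rw [hBm, Module.Basis.toMatrix_apply, Pi.basisFun_repr]
    refine ⟨Bm, ⅟Bm, tt, mul_invOf_self Bm, invOf_mul_self Bm, ?_⟩
    intro j
    ext x k
    have hL : (Q j * Bm) x k = ((Q j) *ᵥ (b k)) x := by
      rw [Matrix.mul_apply, Matrix.mulVec, dotProduct]
      exact Finset.sum_congr rfl fun y _ => by rw [hBapply]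
    have hRR : (Bm * Matrix.diagonal (fun k => if tt k = j then (1:F) else 0)) x k
        = (if tt k = j then (1:F) else 0) * Bm x k := by
      rw [Matrix.mul_diagonal, mul_comm]
    rw [hL, hRR]
    by_cases h : tt k = j
    · rw [if_pos h, one_mul, hBapply]
      exact congrFun (hWfix j (b k) (h ▸ hbmem k)) x
    · rw [if_neg h, zero_mul]
      exact congrFun (hWkill j (tt k) (fun hh => h hh.symm) (b k) (hbmem k)) x
  obtain ⟨Bm, Cm, tt, hBC, hCB, hQB⟩ := hex
  set DF : Fin (r+1) → Matrix (Fin n) (Fin n) F :=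
    fun j => ∑ k : Fin n, (if tt k = j then (1:F) else 0) • stdE F k k with hDF
  have hDFdiag : ∀ j, DF j = Matrix.diagonal (fun k => if tt k = j then (1:F) else 0) :=
    fun j => diagF_eq _
  have hQB' : ∀ j, Q j * Bm = Bm * DF j := by
    intro j
    rw [hDFdiag]
    exact hQB j
  have hQBD : ∀ j, Q j = Bm * DF j * Cm := by
    intro j
    calc Q j = Q j * (Bm * Cm) := by rw [hBC, mul_one]
      _ = (Q j * Bm) * Cm := by rw [mul_assoc]
      _ = Bm * DF j * Cm := by rw [hQB']
  -- transported map
  set ψ : Matrix (Fin n) (Fin n) F → Matrix (Fin n) (Fin n) F :=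
    fun X => φ (Bm * X * Cm) with hψdef
  have hψJ : ∀ X Y, ψ (Jp F X Y) = Jp F (ψ X) (ψ Y) := by
    intro X Y
    rw [hψdef]
    dsimp only
    have h1 : Bm * Jp F X Y * Cm = Jp F (Bm * X * Cm) (Bm * Y * Cm) := by
      simp only [Jp]
      rw [Matrix.mul_smul, Matrix.smul_mul]
      congr 1
      rw [mul_add, add_mul]
      congr 1
      · have hassoc : (Bm * X * Cm) * (Bm * Y * Cm) = Bm * X * (Cm * Bm) * (Y * Cm) := by
          noncomm_ring
        rw [hassoc, hCB]
        noncomm_ring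
      · have hassoc : (Bm * Y * Cm) * (Bm * X * Cm) = Bm * Y * (Cm * Bm) * (X * Cm) := by
          noncomm_ring
        rw [hassoc, hCB]
        noncomm_ring
    rw [h1, hφJ]
  have hψ0 : ψ 0 = 0 := by
    rw [hψdef]
    dsimp only
    rw [mul_zero, zero_mul, h0]
  have hψnz : ψ ≠ 0 := by
    intro hzero
    apply hnz
    funext Z
    have h1 : Bm * (Cm * Z * Bm) * Cm = Z := by
      have hassoc : Bm * (Cm * Z * Bm) * Cm = (Bm * Cm) * Z * (Bm * Cm) := by noncomm_ring
      rw [hassoc, hBC, one_mul, mul_one]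
    have hz := congrFun hzero (Cm * Z * Bm)
    rw [hψdef] at hz
    dsimp only at hz
    rw [h1] at hz
    exact hz
  set lam' : Fin (r+1) → F := Fin.snoc lam 0 with hlam'
  have hmain := main' h2 (Fintype.card_fin n) ψ hψJ hψnz hψ0 tt lam' DF (fun j => rfl)
  have htrans : ∀ j, Bm * (lam' j • DF j) * Cm = lam' j • Q j := by
    intro j
    rw [Matrix.mul_smul, Matrix.smul_mul, hQBD j]
  have hsum1 : Bm * (∑ j, lam' j • DF j) * Cm = ∑ j, lam' j • Q j := by
    rw [Finset.mul_sum, Finset.sum_mul]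
    exact Finset.sum_congr rfl fun j _ => htrans j
  have hsum2 : ∑ i, lam i • P i = ∑ j, lam' j • Q j := by
    symm
    rw [Fin.sum_univ_castSucc]
    rw [hlam', hQ]
    simp only [Fin.snoc_castSucc, Fin.snoc_last, zero_smul, add_zero]
  calc φ (∑ i, lam i • P i) = φ (Bm * (∑ j, lam' j • DF j) * Cm) := by rw [hsum1, ← hsum2]
    _ = ψ (∑ j, lam' j • DF j) := by rw [hψdef]
    _ = ∑ j, ψ (lam' j • DF j) := hmain
    _ = ∑ j, φ (lam' j • Q j) := by
        refine Finset.sum_congr rfl fun j _ => ?_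
        rw [hψdef]
        dsimp only
        rw [htrans j]
    _ = ∑ i, φ (lam i • P i) := by
        rw [Fin.sum_univ_castSucc]
        rw [hlam', hQ]
        simp only [Fin.snoc_castSucc, Fin.snoc_last, zero_smul, h0, add_zero]
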